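/- Let Q be the quadratic form on ℤ³ with Gram matrix [[−2,1,1],[1,0,2],[1,2,0]] in basis (e₁,e₂,e₃), and let Π = {x e₁ + y e₂ + z e₃ : x,y,z ≥ 0, y+z ≥ 2x}. Then h = e₁+e₂+e₃ is the unique integral class D ∈ Π with Q(D,D) = 6 and divisibility div(D) = 3, where div(D) = gcd{Q(D,L) : L ∈ ℤ³}. (Equivalently: the only nonnegative integer solutions of −x² + x(y+z) + 2yz = 3 with y+z ≥ 2x are (1,4,0), (1,1,1), (1,0,4), and among these only (1,1,1) has divisibility 3.) -/
import Mathlib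

lemma aux15 (x y z : ℤ) (hx : 0 ≤ x) (hy : 0 ≤ y) (hz : 0 ≤ z)
    (hp : 2 * x ≤ y + z) (he : -x ^ 2 + x * (y + z) + 2 * y * z = 3) :
    (x, y, z) = (1, 4, 0) ∨ (x, y, z) = (1, 1, 1) ∨ (x, y, z) = (1, 0, 4) := by
  have hx1 : x ≤ 1 := by nlinarith
  interval_cases x
  · exfalso
    have h2 : 2 * (y * z) = 3 := by nlinarith
    omega
  · have hy4 : y ≤ 4 := by nlinarith
    have hz4 : z ≤ 4 := by nlinarith
    have h2 : y + z + 2 * (y * z) = 4 := by nlinarith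
    interval_cases y <;> interval_cases z <;> first | (exfalso; omega) | decide

/-- For the quadratic form with Gram matrix `[[-2,1,1],[1,0,2],[1,2,0]]`,
`h = e₁+e₂+e₃`, i.e. `(x,y,z) = (1,1,1)`, is the unique integral class in
`Π = {x,y,z ≥ 0, y+z ≥ 2x}` with `Q(D,D) = 6` and divisibility
`div(D) = gcd(-2x+y+z, x+2z, x+2y) = 3`.  Moreover the only nonnegative integer
solutions of `-x² + x(y+z) + 2yz = 3` with `y+z ≥ 2x` are `(1,4,0)`, `(1,1,1)`,
`(1,0,4)`. -/
theorem stmt15 :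
    (∀ x y z : ℤ, 0 ≤ x → 0 ≤ y → 0 ≤ z → 2 * x ≤ y + z →
      -2 * x ^ 2 + 2 * x * y + 2 * x * z + 4 * y * z = 6 →
      Int.gcd (Int.gcd (-2 * x + y + z) (x + 2 * z)) (x + 2 * y) = 3 →
      (x, y, z) = (1, 1, 1)) ∧
    (∀ x y z : ℤ, 0 ≤ x → 0 ≤ y → 0 ≤ z → 2 * x ≤ y + z →
      -x ^ 2 + x * (y + z) + 2 * y * z = 3 →
      (x, y, z) = (1, 4, 0) ∨ (x, y, z) = (1, 1, 1) ∨ (x, y, z) = (1, 0, 4)) := by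
  constructor
  · intro x y z hx hy hz hp he hg
    have he' : -x ^ 2 + x * (y + z) + 2 * y * z = 3 := by linarith [he]; 
    rcases aux15 x y z hx hy hz hp he' with h | h | h <;>
      (injection h with h1 h2; injection h2 with h2 h3; subst h1; subst h2; subst h3) <;>
      first
        | rfl
        | (exfalso; revert hg; decide)
  · exact aux15
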